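/- Let Sⁱ (i = 1,…,N) be polyhedra in ℝⁿ (finite intersections of closed half-spaces) with nonempty intersection S. Then there exists α > 0 such that for all x ∈ ℝⁿ, dist(x, S) ≤ α · max_i dist(x, Sⁱ) (i.e., the tuple is linearly regular). -/

import Mathlib

set_option maxHeartbeats 1000000

open scoped RealInnerProductSpace
open Filter

variable {E : Type*} [NormedAddCommGroup E] [InnerProductSpace ℝ E]

theorem my_farkas {ι : Type*} [DecidableEq ι] (T : Finset ι) :
    ∀ (a : ι → E) (c : E),
      (∃ μ : ι → ℝ, (∀ i, 0 ≤ μ i) ∧ c = ∑ i ∈ T, μ i • a i) ∨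
      (∃ d : E, (∀ i ∈ T, ⟪a i, d⟫ ≤ 0) ∧ 0 < ⟪c, d⟫) := by
  induction T using Finset.induction with
  | empty =>
    intro a c
    by_cases hc : c = 0
    · exact Or.inl ⟨fun _ => 0, fun _ => le_rfl, by simp [hc]⟩
    · refine Or.inr ⟨c, by simp, ?_⟩
      rw [real_inner_self_eq_norm_sq]
      have := norm_pos_iff.mpr hc
      positivity
  | @insert j T' hj IH =>
    intro a c
    rcases IH a c with ⟨μ, hμ, hc⟩ | ⟨d, hd, hcd⟩
    · refine Or.inl ⟨fun i => if i = j then 0 else μ i, fun i => by dsimp only; split <;> simp [hμ i], ?_⟩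
      rw [Finset.sum_insert hj]; dsimp only
      rw [if_pos rfl, zero_smul, zero_add]
      rw [hc]
      exact Finset.sum_congr rfl fun i hi => by rw [if_neg (fun (h : _ = j) => hj (h ▸ hi))]
    · by_cases haj : ⟪a j, d⟫ ≤ 0
      · refine Or.inr ⟨d, fun i hi => ?_, hcd⟩
        rcases Finset.mem_insert.1 hi with rfl | hi
        · exact haj
        · exact hd i hi
      · push_neg at haj
        set s : ℝ := ⟪c, d⟫ / ⟪a j, d⟫ with hs
        have hspos : 0 < s := div_pos hcd haj
        set c' : E := c - s • a j with hc'
        set a' : ι → E := fun i => a i - (⟪a i, d⟫ / ⟪a j, d⟫) • a j with ha'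
        rcases IH a' c' with ⟨μ, hμ, hrep⟩ | ⟨d', hd', hcd'⟩
        · -- c = ∑_{T'} μ i • a i + (coefficient) • a j with nonneg coefficient
          refine Or.inl ⟨fun i => if i = j then s - ∑ i ∈ T', μ i * (⟪a i, d⟫ / ⟪a j, d⟫)
              else μ i, fun i => ?_, ?_⟩
          · dsimp only; split
            · have : ∀ i ∈ T', 0 ≤ -(μ i * (⟪a i, d⟫ / ⟪a j, d⟫)) := fun i hi => by
                have h1 : ⟪a i, d⟫ ≤ 0 := hd i hi
                have : μ i * (⟪a i, d⟫ / ⟪a j, d⟫) ≤ 0 :=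
                  mul_nonpos_of_nonneg_of_nonpos (hμ i) (div_nonpos_of_nonpos_of_nonneg h1 haj.le)
                linarith
              have hsum : ∑ i ∈ T', μ i * (⟪a i, d⟫ / ⟪a j, d⟫) ≤ 0 := by
                apply Finset.sum_nonpos
                intro i hi
                have := this i hi; linarith
              linarith
            · exact hμ i
          · rw [Finset.sum_insert hj]; dsimp only
            rw [if_pos rfl]
            have hrep' : c = s • a j + ∑ i ∈ T', μ i • a i
                - ∑ i ∈ T', (μ i * (⟪a i, d⟫ / ⟪a j, d⟫)) • a j := by
              have : ∑ i ∈ T', μ i • a' i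
                  = ∑ i ∈ T', μ i • a i - ∑ i ∈ T', (μ i * (⟪a i, d⟫ / ⟪a j, d⟫)) • a j := by
                rw [← Finset.sum_sub_distrib]
                refine Finset.sum_congr rfl fun i hi => ?_
                rw [ha']; simp [smul_sub, smul_smul]
              have h2 := hrep
              rw [hc'] at h2
              rw [this] at h2
              have : c = s • a j + (∑ i ∈ T', μ i • a i
                  - ∑ i ∈ T', (μ i * (⟪a i, d⟫ / ⟪a j, d⟫)) • a j) := by
                rw [← h2]; abel
              rw [this]; abel
            rw [hrep', ← Finset.sum_smul, sub_smul]
            have : ∑ i ∈ T', (if i = j then s - ∑ i ∈ T', μ i * (⟪a i, d⟫ / ⟪a j, d⟫) else μ i) • a i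
                = ∑ i ∈ T', μ i • a i :=
              Finset.sum_congr rfl fun i hi => by rw [if_neg (fun (h : _ = j) => hj (h ▸ hi))]
            rw [this]; abel
        · refine Or.inr ⟨d' - (⟪a j, d'⟫ / ⟪a j, d⟫) • d, fun i hi => ?_, ?_⟩
          · rcases Finset.mem_insert.1 hi with rfl | hi
            · rw [inner_sub_right, real_inner_smul_right]
              rw [div_mul_cancel₀ _ (ne_of_gt haj)]
              simp
            · have h1 : ⟪a' i, d'⟫ ≤ 0 := hd' i hi
              rw [ha'] at h1
              rw [inner_sub_left, real_inner_smul_left] at h1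
              rw [inner_sub_right, real_inner_smul_right]
              have h2 : ⟪a i, d⟫ ≤ 0 := hd i hi
              have heq : ⟪a j, d'⟫ / ⟪a j, d⟫ * ⟪a i, d⟫
                  = ⟪a i, d⟫ / ⟪a j, d⟫ * ⟪a j, d'⟫ := by ring
              linarith
          · have h1 : 0 < ⟪c', d'⟫ := hcd'
            rw [hc', inner_sub_left, real_inner_smul_left] at h1
            rw [inner_sub_right, real_inner_smul_right]
            rw [hs] at h1
            have heq : ⟪a j, d'⟫ / ⟪a j, d⟫ * ⟪c, d⟫
                = ⟪c, d⟫ / ⟪a j, d⟫ * ⟪a j, d'⟫ := by ring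
            linarith

theorem my_cara {ι : Type*} [DecidableEq ι] (a : ι → E) :
    ∀ (T : Finset ι) (c : E),
    (∃ μ : ι → ℝ, (∀ i, 0 ≤ μ i) ∧ c = ∑ i ∈ T, μ i • a i) →
    ∃ T₀ : Finset ι, T₀ ⊆ T ∧ LinearIndependent ℝ (fun i : ↥T₀ => a ↑i) ∧
      ∃ μ : ι → ℝ, (∀ i, 0 ≤ μ i) ∧ c = ∑ i ∈ T₀, μ i • a i := by
  intro T
  induction T using Finset.strongInduction with
  | _ T IH =>
    intro c ⟨μ, hμ, hc⟩
    by_cases hind : LinearIndependent ℝ (fun i : ↥T => a ↑i)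
    · exact ⟨T, le_refl _, hind, μ, hμ, hc⟩
    · obtain ⟨g, hg0, k, hk⟩ := Fintype.not_linearIndependent_iff.1 hind
      -- extend g to ν on ι, then WLOG some positive coefficient
      have main : ∀ ν : ι → ℝ, (∑ i ∈ T, ν i • a i = 0) → (∃ i ∈ T, 0 < ν i) →
          ∃ T₀ : Finset ι, T₀ ⊆ T ∧ LinearIndependent ℝ (fun i : ↥T₀ => a ↑i) ∧
            ∃ μ' : ι → ℝ, (∀ i, 0 ≤ μ' i) ∧ c = ∑ i ∈ T₀, μ' i • a i := by
        intro ν hν0 hpos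
        classical
        set F := T.filter (fun i => 0 < ν i) with hF
        have hFne : F.Nonempty := by
          obtain ⟨i, hi, hiv⟩ := hpos
          exact ⟨i, Finset.mem_filter.2 ⟨hi, hiv⟩⟩
        obtain ⟨i₀, hi₀F, hi₀min⟩ := Finset.exists_min_image F (fun i => μ i / ν i) hFne
        obtain ⟨hi₀T, hνi₀⟩ := Finset.mem_filter.1 hi₀F
        set t := μ i₀ / ν i₀ with ht
        have htnn : 0 ≤ t := div_nonneg (hμ i₀) hνi₀.le
        set μ' : ι → ℝ := fun i => if i ∈ T then μ i - t * ν i else 0 with hμ'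
        have hμ'nn : ∀ i, 0 ≤ μ' i := by
          intro i
          rw [hμ']
          dsimp only
          split
          · rename_i hiT
            by_cases hνi : 0 < ν i
            · have := hi₀min i (Finset.mem_filter.2 ⟨hiT, hνi⟩)
              rw [div_le_div_iff₀ hνi₀ hνi] at this
              rw [ht]
              rw [sub_nonneg, div_mul_eq_mul_div, div_le_iff₀ hνi₀]
              linarith
            · push_neg at hνi
              nlinarith [hμ i, mul_nonpos_of_nonneg_of_nonpos htnn hνi]
          · exact le_refl _
        have hμ'i₀ : μ' i₀ = 0 := by
          rw [hμ']; dsimp only; rw [if_pos hi₀T, ht]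
          field_simp
          ring
        have hsum : c = ∑ i ∈ T, μ' i • a i := by
          have : ∑ i ∈ T, μ' i • a i = ∑ i ∈ T, (μ i • a i - t • (ν i • a i)) := by
            refine Finset.sum_congr rfl fun i hi => ?_
            rw [hμ']; dsimp only; rw [if_pos hi, sub_smul, smul_smul]
          rw [this, Finset.sum_sub_distrib, ← Finset.smul_sum, hν0, smul_zero, sub_zero, hc]
        have hsum' : c = ∑ i ∈ T.erase i₀, μ' i • a i := by
          rw [hsum, ← Finset.add_sum_erase T _ hi₀T, hμ'i₀, zero_smul, zero_add]
        obtain ⟨T₀, hT₀, hind₀, hrep₀⟩ :=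
          IH (T.erase i₀) (Finset.erase_ssubset hi₀T) c ⟨μ', hμ'nn, hsum'⟩
        exact ⟨T₀, hT₀.trans (Finset.erase_subset _ _), hind₀, hrep₀⟩
      set ν : ι → ℝ := fun i => if h : i ∈ T then g ⟨i, h⟩ else 0 with hνdef
      have hν0 : ∑ i ∈ T, ν i • a i = 0 := by
        rw [← Finset.sum_attach T (fun i => ν i • a i)]
        rw [← hg0]
        refine Finset.sum_congr rfl fun i _ => ?_
        rw [hνdef]; dsimp only; rw [dif_pos i.2]
      by_cases hp : ∃ i ∈ T, 0 < ν i
      · exact main ν hν0 hp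
      · push_neg at hp
        refine main (fun i => -ν i) ?_ ?_
        · have h3 : ∑ i ∈ T, (fun i => -ν i) i • a i = -∑ i ∈ T, ν i • a i := by
            simp [neg_smul]
          rw [h3, hν0, neg_zero]
        · refine ⟨k, k.2, ?_⟩
          have hνk : ν ↑k = g k := by rw [hνdef]; dsimp only; rw [dif_pos k.2]
          have h2 := hp ↑k k.2
          rw [hνk] at h2
          rw [hνk]
          rcases lt_or_eq_of_le h2 with h | h
          · linarith
          · exact absurd h hk

theorem my_coeff_bound {ι : Type*} [DecidableEq ι] (T₀ : Finset ι) (a : ι → E) :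
    ∃ C : ℝ, 0 ≤ C ∧ (LinearIndependent ℝ (fun i : ↥T₀ => a ↑i) →
      ∀ μ : ι → ℝ, (∀ i, 0 ≤ μ i) →
        ∑ i ∈ T₀, μ i ≤ C * ‖∑ i ∈ T₀, μ i • a i‖) := by
  by_cases hind : LinearIndependent ℝ (fun i : ↥T₀ => a ↑i)
  swap
  · exact ⟨0, le_refl _, fun h => absurd h hind⟩
  rcases Finset.eq_empty_or_nonempty T₀ with rfl | hT₀ne
  · exact ⟨0, le_refl _, fun _ μ _ => by simp⟩
  set L : (↥T₀ → ℝ) →ₗ[ℝ] E :=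
    { toFun := fun g => ∑ i : ↥T₀, g i • a ↑i
      map_add' := by
        intro g₁ g₂
        simp [add_smul, Finset.sum_add_distrib]
      map_smul' := by
        intro r g
        simp [smul_smul, Finset.smul_sum] } with hLdef
  have hLcont : Continuous L := LinearMap.continuous_of_finiteDimensional L
  have hLinj : ∀ g : ↥T₀ → ℝ, L g = 0 → g = 0 := by
    intro g hg
    have := Fintype.linearIndependent_iff.1 hind g hg
    funext i; exact this i
  -- min of ‖L g‖ on the unit sphere is positive
  have hsne : (Metric.sphere (0 : ↥T₀ → ℝ) 1).Nonempty := by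
    obtain ⟨j, hj⟩ := hT₀ne
    haveI : Nonempty ↥T₀ := ⟨⟨j, hj⟩⟩
    exact NormedSpace.sphere_nonempty.2 zero_le_one
  obtain ⟨g₀, hg₀mem, hg₀min⟩ := (isCompact_sphere (0 : ↥T₀ → ℝ) 1).exists_isMinOn
    hsne (continuous_norm.comp hLcont).continuousOn
  have hg₀ : ‖g₀‖ = 1 := by rwa [Metric.mem_sphere, dist_zero_right] at hg₀mem
  set c := ‖L g₀‖ with hc
  have hcpos : 0 < c := by
    rw [hc, norm_pos_iff]
    intro h0
    have := hLinj g₀ h0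
    rw [this, norm_zero] at hg₀
    exact one_ne_zero hg₀.symm
  have key : ∀ g : ↥T₀ → ℝ, c * ‖g‖ ≤ ‖L g‖ := by
    intro g
    rcases eq_or_ne g 0 with rfl | hgne
    · simp
    · have hn : ‖g‖ ≠ 0 := norm_ne_zero_iff.2 hgne
      have hmem : (‖g‖⁻¹ • g) ∈ Metric.sphere (0 : ↥T₀ → ℝ) 1 := by
        rw [Metric.mem_sphere, dist_zero_right, norm_smul, norm_inv, norm_norm]
        field_simp
      have h1 : c ≤ ‖L (‖g‖⁻¹ • g)‖ := hg₀min hmem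
      rw [map_smul, norm_smul, norm_inv, norm_norm] at h1
      rw [← mul_le_mul_iff_of_pos_right (show (0:ℝ) < ‖g‖ from lt_of_le_of_ne (norm_nonneg _) (Ne.symm hn))] at h1
      calc c * ‖g‖ ≤ ‖g‖⁻¹ * ‖L g‖ * ‖g‖ := h1
      _ = ‖L g‖ := by field_simp
  refine ⟨T₀.card * c⁻¹, mul_nonneg (Nat.cast_nonneg _) (inv_nonneg.2 hcpos.le), fun _ μ hμ => ?_⟩
  set g : ↥T₀ → ℝ := fun i => μ ↑i with hg
  have hv : ∑ i ∈ T₀, μ i • a i = L g := by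
    show _ = ∑ i : ↥T₀, g i • a ↑i
    rw [← Finset.sum_coe_sort T₀ (fun i => μ i • a i)]
  have hsum : ∑ i ∈ T₀, μ i ≤ T₀.card * ‖g‖ := by
    rw [← Finset.sum_attach T₀ (fun i => μ i)]
    calc ∑ i : ↥T₀, μ ↑i ≤ ∑ _i : ↥T₀, ‖g‖ := by
          refine Finset.sum_le_sum fun i _ => ?_
          calc μ ↑i ≤ |g i| := le_abs_self _
          _ = ‖g i‖ := (Real.norm_eq_abs _).symm
          _ ≤ ‖g‖ := norm_le_pi_norm g i
    _ = T₀.card * ‖g‖ := by simp [Finset.card_attach, mul_comm]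
  have hgb : ‖g‖ ≤ c⁻¹ * ‖L g‖ := by
    rw [le_inv_mul_iff₀ hcpos]
    exact key g
  calc ∑ i ∈ T₀, μ i ≤ T₀.card * ‖g‖ := hsum
  _ ≤ T₀.card * (c⁻¹ * ‖L g‖) := mul_le_mul_of_nonneg_left hgb (Nat.cast_nonneg _)
  _ = (T₀.card * c⁻¹) * ‖L g‖ := by ring
  _ = (T₀.card * c⁻¹) * ‖∑ i ∈ T₀, μ i • a i‖ := by rw [hv]

theorem my_poly_closed {κ : Type*} (a : κ → E) (b : κ → ℝ) :
    IsClosed {x : E | ∀ j, ⟪a j, x⟫ ≤ b j} := by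
  have : {x : E | ∀ j, ⟪a j, x⟫ ≤ b j} = ⋂ j, {x : E | ⟪a j, x⟫ ≤ b j} := by
    ext x; simp [Set.mem_iInter]
  rw [this]
  exact isClosed_iInter fun j =>
    isClosed_le (continuous_const.inner continuous_id) continuous_const

theorem my_hoffman [FiniteDimensional ℝ E] {ι : Type*} [Fintype ι] [DecidableEq ι]
    (a : ι → E) (b : ι → ℝ) (P : Set E) (hP : P = {x | ∀ j, ⟪a j, x⟫ ≤ b j})
    (hne : P.Nonempty) :
    ∃ C : ℝ, 0 < C ∧ ∀ x, Metric.infDist x P ≤ C * ∑ j, max (⟪a j, x⟫ - b j) 0 := by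
  classical
  have hinner_cont : ∀ j : ι, Continuous fun x : E => ⟪a j, x⟫ := fun j =>
    continuous_const.inner continuous_id
  have hclosed : IsClosed P := by
    rw [hP]
    have : {x : E | ∀ j, ⟪a j, x⟫ ≤ b j} = ⋂ j, {x : E | ⟪a j, x⟫ ≤ b j} := by
      ext x; simp [Set.mem_iInter]
    rw [this]
    exact isClosed_iInter fun j => isClosed_le (hinner_cont j) continuous_const
  have hconv : Convex ℝ P := by
    rw [hP]
    have : {x : E | ∀ j, ⟪a j, x⟫ ≤ b j} = ⋂ j, {x : E | ⟪a j, x⟫ ≤ b j} := by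
      ext x; simp [Set.mem_iInter]
    rw [this]
    refine convex_iInter fun j => convex_halfSpace_le ?_ _
    exact ⟨fun u v => inner_add_right _ _ _, fun c u => real_inner_smul_right _ _ _⟩
  obtain ⟨Cf, hCf0, hCfB⟩ :
      ∃ Cf : Finset ι → ℝ, (∀ T₀, 0 ≤ Cf T₀) ∧
        ∀ T₀ : Finset ι, LinearIndependent ℝ (fun i : ↥T₀ => a ↑i) →
          ∀ μ : ι → ℝ, (∀ i, 0 ≤ μ i) →
            ∑ i ∈ T₀, μ i ≤ Cf T₀ * ‖∑ i ∈ T₀, μ i • a i‖ := by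
    choose Cf h1 h2 using fun T₀ : Finset ι => my_coeff_bound T₀ a
    exact ⟨Cf, h1, h2⟩
  set Cmax : ℝ := Finset.univ.sup' ⟨∅, Finset.mem_univ ∅⟩ Cf with hCmax
  have hCmax0 : 0 ≤ Cmax := le_trans (hCf0 ∅) (Finset.le_sup' Cf (Finset.mem_univ ∅))
  refine ⟨Cmax + 1, by linarith, fun x => ?_⟩
  set r : ℝ := ∑ j, max (⟪a j, x⟫ - b j) 0 with hr
  have hr0 : 0 ≤ r := Finset.sum_nonneg fun j _ => le_max_right _ _
  obtain ⟨y, hyP, hd⟩ := hclosed.exists_infDist_eq_dist hne x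
  have hvar : ∀ z ∈ P, ⟪x - y, z - y⟫ ≤ 0 := by
    have hnorm : ‖x - y‖ = ⨅ w : P, ‖x - w‖ := by
      rw [← dist_eq_norm, ← hd, Metric.infDist_eq_iInf]
      congr 1
      funext w
      rw [dist_eq_norm]
    exact (norm_eq_iInf_iff_real_inner_le_zero hconv hyP).1 hnorm
  set J : Finset ι := Finset.univ.filter (fun j => ⟪a j, y⟫ = b j) with hJ
  have hcone : ∀ d : E, (∀ j ∈ J, ⟪a j, d⟫ ≤ 0) → ⟪x - y, d⟫ ≤ 0 := by
    intro d hdJ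
    have hev : ∀ᶠ t in nhdsWithin (0:ℝ) (Set.Ioi 0), (y + t • d) ∈ P := by
      have : ∀ᶠ t in nhdsWithin (0:ℝ) (Set.Ioi 0), ∀ j, ⟪a j, y + t • d⟫ ≤ b j := by
        rw [eventually_all]
        intro j
        by_cases hjJ : j ∈ J
        · refine eventually_nhdsWithin_of_forall fun t ht => ?_
          have h1 : ⟪a j, y + t • d⟫ = ⟪a j, y⟫ + t * ⟪a j, d⟫ := by
            rw [inner_add_right, real_inner_smul_right]
          have h2 : ⟪a j, y⟫ = b j := (Finset.mem_filter.1 hjJ).2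
          have h3 : ⟪a j, d⟫ ≤ 0 := hdJ j hjJ
          have ht' : 0 < t := ht
          nlinarith
        · have hy_le : ⟪a j, y⟫ ≤ b j := by
            have := hyP
            rw [hP] at this
            exact this j
          have hlt : ⟪a j, y⟫ < b j := by
            rcases lt_or_eq_of_le hy_le with h | h
            · exact h
            · exact absurd (Finset.mem_filter.2 ⟨Finset.mem_univ j, h⟩) hjJ
          have hcont : Filter.Tendsto (fun t : ℝ => ⟪a j, y + t • d⟫) (nhds 0)
              (nhds ⟪a j, y + (0:ℝ) • d⟫) := by
            apply Continuous.tendsto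
            exact (hinner_cont j).comp (continuous_const.add (continuous_id.smul continuous_const))
          have h0 : ⟪a j, y + (0:ℝ) • d⟫ = ⟪a j, y⟫ := by simp
          rw [h0] at hcont
          have := hcont.eventually_lt_const hlt
          exact (this.filter_mono nhdsWithin_le_nhds).mono fun t ht => ht.le
      refine this.mono fun t ht => ?_
      rw [hP]
      exact ht
    obtain ⟨t, htP, htpos⟩ := (hev.and eventually_mem_nhdsWithin).exists
    have h1 := hvar (y + t • d) htP
    have h2 : y + t • d - y = t • d := by abel
    rw [h2, real_inner_smul_right] at h1
    have htpos' : (0:ℝ) < t := htpos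
    nlinarith
  have hfar := my_farkas J a (x - y)
  rcases hfar with hrep | ⟨d, hd, hcd⟩
  swap
  · exact absurd hcd (not_lt.2 (hcone d hd))
  obtain ⟨T₀, hT₀J, hind, μ', hμ', hrep'⟩ := my_cara a J (x - y) hrep
  have hcoef : ∑ i ∈ T₀, μ' i ≤ Cf T₀ * ‖x - y‖ := by
    have := hCfB T₀ hind μ' hμ'
    rwa [← hrep'] at this
  have hsq : ⟪x - y, x - y⟫ ≤ (∑ i ∈ T₀, μ' i) * r := by
    nth_rewrite 1 [hrep']
    rw [sum_inner]
    rw [Finset.sum_mul]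
    refine Finset.sum_le_sum fun j hj => ?_
    rw [real_inner_smul_left]
    refine mul_le_mul_of_nonneg_left ?_ (hμ' j)
    have hjJ : j ∈ J := hT₀J hj
    have hact : ⟪a j, y⟫ = b j := (Finset.mem_filter.1 hjJ).2
    have h1 : ⟪a j, x - y⟫ = ⟪a j, x⟫ - b j := by
      rw [inner_sub_right, hact]
    rw [h1]
    calc ⟪a j, x⟫ - b j ≤ max (⟪a j, x⟫ - b j) 0 := le_max_left _ _
    _ ≤ r := by
        rw [hr]
        exact Finset.single_le_sum (f := fun i => max (⟪a i, x⟫ - b i) 0)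
          (fun i _ => le_max_right (⟪a i, x⟫ - b i) 0) (Finset.mem_univ j)
  have hCfmax : Cf T₀ ≤ Cmax := Finset.le_sup' Cf (Finset.mem_univ T₀)
  have hnormsq : ‖x - y‖ ^ 2 ≤ (Cmax + 1) * ‖x - y‖ * r := by
    rw [← real_inner_self_eq_norm_sq]
    calc ⟪x - y, x - y⟫ ≤ (∑ i ∈ T₀, μ' i) * r := hsq
    _ ≤ (Cf T₀ * ‖x - y‖) * r := mul_le_mul_of_nonneg_right hcoef hr0
    _ ≤ ((Cmax + 1) * ‖x - y‖) * r := by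
        refine mul_le_mul_of_nonneg_right (mul_le_mul_of_nonneg_right ?_ (norm_nonneg _)) hr0
        linarith
  have hdist : Metric.infDist x P = ‖x - y‖ := by rw [hd, dist_eq_norm]
  rw [hdist]
  rcases eq_or_ne ‖x - y‖ 0 with hz | hz
  · rw [hz]
    have : (0:ℝ) ≤ (Cmax + 1) * r := by positivity
    linarith
  · have hpos : 0 < ‖x - y‖ := lt_of_le_of_ne (norm_nonneg _) (Ne.symm hz)
    have := hnormsq
    rw [pow_two] at this
    have h3 : ‖x - y‖ * ‖x - y‖ ≤ ((Cmax + 1) * r) * ‖x - y‖ := by ring_nf; ring_nf at this; linarith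
    exact le_of_mul_le_mul_right h3 hpos

theorem stmt14 {n N : ℕ} (hN : 0 < N) (S : Fin N → Set (EuclideanSpace ℝ (Fin n)))
    (hpoly : ∀ i, ∃ (m : ℕ) (A : Fin m → EuclideanSpace ℝ (Fin n)) (b : Fin m → ℝ),
      S i = {x | ∀ j, ⟪A j, x⟫ ≤ b j})
    (Sint : Set (EuclideanSpace ℝ (Fin n))) (hSint : Sint = ⋂ i, S i)
    (hSne : Sint.Nonempty) :
    ∃ α : ℝ, 0 < α ∧ ∀ x : EuclideanSpace ℝ (Fin n),
      Metric.infDist x Sint ≤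
        α * (Finset.univ.sup' (Finset.univ_nonempty_iff.mpr ⟨⟨0, hN⟩⟩)
          fun i => Metric.infDist x (S i)) := by
  classical
  choose m A b hSpoly using hpoly
  set ι := (Σ i : Fin N, Fin (m i)) with hι
  set a : ι → EuclideanSpace ℝ (Fin n) := fun p => A p.1 p.2 with ha
  set bb : ι → ℝ := fun p => b p.1 p.2 with hbb
  have hSint' : Sint = {x | ∀ p : ι, ⟪a p, x⟫ ≤ bb p} := by
    rw [hSint]
    ext x
    simp only [Set.mem_iInter, Set.mem_setOf_eq]
    constructor
    · intro h p
      have h2 := h p.1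
      rw [hSpoly p.1] at h2
      exact h2 p.2
    · intro h i
      rw [hSpoly i]
      exact fun j => h ⟨i, j⟩
  obtain ⟨C, hCpos, hC⟩ := my_hoffman a bb Sint hSint' hSne
  set K : ℝ := ∑ p : ι, ‖a p‖ with hK
  have hK0 : 0 ≤ K := Finset.sum_nonneg fun p _ => norm_nonneg _
  refine ⟨C * K + 1, by positivity, fun x => ?_⟩
  set M : ℝ := Finset.univ.sup' (Finset.univ_nonempty_iff.mpr ⟨⟨0, hN⟩⟩)
    (fun i => Metric.infDist x (S i)) with hM
  have hM0 : 0 ≤ M :=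
    le_trans Metric.infDist_nonneg
      (Finset.le_sup' (fun i => Metric.infDist x (S i)) (Finset.mem_univ (⟨0, hN⟩ : Fin N)))
  have hSclosed : ∀ i, IsClosed (S i) := fun i => by
    rw [hSpoly i]; exact my_poly_closed _ _
  have hSne' : ∀ i, (S i).Nonempty := fun i => by
    obtain ⟨z, hz⟩ := hSne
    rw [hSint] at hz
    exact ⟨z, Set.mem_iInter.1 hz i⟩
  have hterm : ∀ p : ι, max (⟪a p, x⟫ - bb p) 0 ≤ ‖a p‖ * M := by
    intro p
    obtain ⟨y, hy, hdy⟩ := (hSclosed p.1).exists_infDist_eq_dist (hSne' p.1) x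
    have hyb : ⟪a p, y⟫ ≤ bb p := by
      have := hy
      rw [hSpoly p.1] at this
      exact this p.2
    have h1 : ⟪a p, x⟫ - bb p ≤ ‖a p‖ * Metric.infDist x (S p.1) := by
      calc ⟪a p, x⟫ - bb p ≤ ⟪a p, x⟫ - ⟪a p, y⟫ := by linarith
      _ = ⟪a p, x - y⟫ := (inner_sub_right _ _ _).symm
      _ ≤ ‖a p‖ * ‖x - y‖ := real_inner_le_norm _ _
      _ = ‖a p‖ * Metric.infDist x (S p.1) := by rw [hdy, dist_eq_norm]
    have h2 : Metric.infDist x (S p.1) ≤ M :=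
      Finset.le_sup' (fun i => Metric.infDist x (S i)) (Finset.mem_univ p.1)
    have h3 : ⟪a p, x⟫ - bb p ≤ ‖a p‖ * M :=
      h1.trans (mul_le_mul_of_nonneg_left h2 (norm_nonneg _))
    exact max_le h3 (by positivity)
  calc Metric.infDist x Sint ≤ C * ∑ p : ι, max (⟪a p, x⟫ - bb p) 0 := hC x
  _ ≤ C * ∑ p : ι, ‖a p‖ * M := by
      refine mul_le_mul_of_nonneg_left (Finset.sum_le_sum fun p _ => hterm p) hCpos.le
  _ = C * K * M := by rw [← Finset.sum_mul, ← hK, mul_assoc]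
  _ ≤ (C * K + 1) * M := by nlinarith
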